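/- Let n, l₀, i be natural numbers with l₀ ≥ 1, i ≥ 1 and i·l₀ ≤ n, let δ ∈ [0,1] be real, and let A be a family of l₀-element subsets of [n] with |A| ≥ (1 − δ)·C(n, l₀). Then |Ext(A, i·l₀)| ≥ (1 − δ^i)·C(n, i·l₀). -/

import Mathlib

attribute [-instance] instDecidableEqFin

open Finset

/-! ### Real-parameter binomial coefficients -/

noncomputable def rbin (x : ℝ) (m : ℕ) : ℝ := (∏ j ∈ Finset.range m, (x - j)) / m.factorial

lemma rbin_zero (x : ℝ) : rbin x 0 = 1 := by simp [rbin]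

lemma rbin_succ (x : ℝ) (m : ℕ) : rbin x (m + 1) = rbin x m * ((x - m) / (m + 1)) := by
  have h1 : ((m + 1).factorial : ℝ) = (m.factorial : ℝ) * (m + 1) := by
    rw [Nat.factorial_succ]; push_cast; ring
  have h2 : (m.factorial : ℝ) ≠ 0 := by positivity
  have h3 : ((m : ℝ) + 1) ≠ 0 := by positivity
  simp only [rbin, Finset.prod_range_succ, h1]
  field_simp
  try ring

lemma rbin_nonneg {x : ℝ} {m : ℕ} (h : (m : ℝ) - 1 ≤ x) : 0 ≤ rbin x m := by
  apply div_nonneg _ (by positivity)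
  apply Finset.prod_nonneg
  intro j hj
  have hj' : (j : ℝ) + 1 ≤ m := by exact_mod_cast Finset.mem_range.1 hj
  linarith

lemma rbin_pos {x : ℝ} {m : ℕ} (h : (m : ℝ) - 1 < x) : 0 < rbin x m := by
  apply div_pos _ (by positivity)
  apply Finset.prod_pos
  intro j hj
  have hj' : (j : ℝ) + 1 ≤ m := by exact_mod_cast Finset.mem_range.1 hj
  linarith

lemma rbin_mono {x y : ℝ} {m : ℕ} (hx : (m : ℝ) - 1 ≤ x) (hxy : x ≤ y) :
    rbin x m ≤ rbin y m := by
  have : (0:ℝ) < m.factorial := by positivity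
  apply div_le_div_of_nonneg_right ?_ this.le |>.trans_eq rfl
  · apply Finset.prod_le_prod
    · intro j hj
      have hj' : (j : ℝ) + 1 ≤ m := by exact_mod_cast Finset.mem_range.1 hj
      linarith
    · intro j _; linarith

lemma rbin_strictMono {x y : ℝ} {m : ℕ} (hm : 1 ≤ m) (hx : (m : ℝ) - 1 ≤ x) (hxy : x < y) :
    rbin x m < rbin y m := by
  have hfact : (0:ℝ) < m.factorial := by positivity
  rcases eq_or_lt_of_le hx with h | h
  · have h0 : rbin x m = 0 := by
      unfold rbin
      rw [Finset.prod_eq_zero (Finset.mem_range.2 (Nat.sub_lt hm Nat.one_pos)), zero_div]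
      have : ((m - 1 : ℕ) : ℝ) = (m : ℝ) - 1 := by
        rw [Nat.cast_sub hm]; norm_num
      rw [this, ← h]; ring
    rw [h0]
    exact rbin_pos (lt_of_le_of_lt hx hxy)
  · unfold rbin
    apply div_lt_div_of_pos_right ?_ hfact
    apply Finset.prod_lt_prod_of_nonempty
    · intro j hj
      have hj' : (j : ℝ) + 1 ≤ m := by exact_mod_cast Finset.mem_range.1 hj
      linarith
    · intro j _; linarith
    · exact Finset.nonempty_range_iff.2 (by omega)

lemma le_arg_of_rbin_le {x y : ℝ} {m : ℕ} (hm : 1 ≤ m) (hx : (m : ℝ) - 1 ≤ x)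
    (hy : (m : ℝ) - 1 ≤ y) (h : rbin x m ≤ rbin y m) : x ≤ y := by
  by_contra hc
  push_neg at hc
  exact absurd h (not_le.2 (rbin_strictMono hm hy hc))

lemma rbin_pascal (x : ℝ) (m : ℕ) : rbin (x + 1) (m + 1) = rbin x (m + 1) + rbin x m := by
  have h : ∏ j ∈ Finset.range (m + 1), (x + 1 - j) = (x + 1) * ∏ j ∈ Finset.range m, (x - j) := by
    rw [Finset.prod_range_succ']
    have e1 : ∀ j ∈ Finset.range m, (x + 1 - ((j + 1 : ℕ) : ℝ)) = x - j := by
      intro j _; push_cast; ring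
    rw [Finset.prod_congr rfl e1]
    push_cast; ring
  have h1 : ((m + 1).factorial : ℝ) = (m.factorial : ℝ) * (m + 1) := by
    rw [Nat.factorial_succ]; push_cast; ring
  have h2 : (m.factorial : ℝ) ≠ 0 := by positivity
  have h3 : ((m : ℝ) + 1) ≠ 0 := by positivity
  simp only [rbin, Finset.prod_range_succ, h, h1]
  field_simp
  ring

lemma rbin_nat (K m : ℕ) : rbin (K : ℝ) m = K.choose m := by
  induction m with
  | zero => simp [rbin_zero]
  | succ m ih =>
    rcases le_or_gt (m + 1) K with h | h
    · have hm : m < K := h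
      rw [rbin_succ, ih]
      have : (K.choose (m+1) : ℝ) * (m + 1) = (K.choose m : ℝ) * (K - m) := by
        have := Nat.choose_succ_right_eq K m
        have hcast : ((K - m : ℕ) : ℝ) = (K : ℝ) - m := by
          rw [Nat.cast_sub hm.le]
        calc (K.choose (m+1) : ℝ) * (m + 1) = ((K.choose (m+1) * (m+1) : ℕ) : ℝ) := by push_cast; ring
          _ = ((K.choose m * (K - m) : ℕ) : ℝ) := by rw [this]
          _ = (K.choose m : ℝ) * ((K:ℝ) - m) := by push_cast [hcast]; ring
      have h3 : ((m : ℝ) + 1) ≠ 0 := by positivity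
      field_simp
      linarith [this]
    · have h0 : K.choose (m + 1) = 0 := Nat.choose_eq_zero_of_lt h
      have : ∏ j ∈ Finset.range (m + 1), ((K:ℝ) - j) = 0 := by
        apply Finset.prod_eq_zero (Finset.mem_range.2 h)
        simp
      rw [h0]
      unfold rbin
      rw [this]
      simp

/-! ### Chord (convexity) lemma -/

lemma prod_add_le_chord {t : ℝ} (h0 : 0 ≤ t) (h1 : t ≤ 1) (s : Finset ℕ) (a : ℕ → ℝ)
    (ha : ∀ j ∈ s, 0 ≤ a j) :
    ∏ j ∈ s, (a j + t) ≤ (1 - t) * ∏ j ∈ s, a j + t * ∏ j ∈ s, (a j + 1) := by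
  classical
  induction s using Finset.induction_on with
  | empty => simp
  | @insert i s hi ih =>
    have ha' : ∀ j ∈ s, 0 ≤ a j := fun j hj => ha j (Finset.mem_insert_of_mem hj)
    have hai : 0 ≤ a i := ha i (Finset.mem_insert_self i s)
    have ihs := ih ha'
    have hA : 0 ≤ ∏ j ∈ s, a j := Finset.prod_nonneg ha'
    have hAB : ∏ j ∈ s, a j ≤ ∏ j ∈ s, (a j + 1) := by
      apply Finset.prod_le_prod ha'
      intro j _; linarith
    have hP : 0 ≤ ∏ j ∈ s, (a j + t) := Finset.prod_nonneg (fun j hj => by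
      have := ha' j hj; linarith)
    rw [Finset.prod_insert hi, Finset.prod_insert hi, Finset.prod_insert hi]
    calc (a i + t) * ∏ j ∈ s, (a j + t)
        ≤ (a i + t) * ((1 - t) * ∏ j ∈ s, a j + t * ∏ j ∈ s, (a j + 1)) := by
          apply mul_le_mul_of_nonneg_left ihs (by linarith)
      _ ≤ (1 - t) * (a i * ∏ j ∈ s, a j) + t * ((a i + 1) * ∏ j ∈ s, (a j + 1)) := by
          nlinarith [mul_nonneg (mul_nonneg h0 (sub_nonneg.2 h1)) (sub_nonneg.2 hAB)]

lemma rbin_chord {K : ℝ} {m : ℕ} (hK : (m : ℝ) ≤ K) {t : ℝ} (h0 : 0 ≤ t) (h1 : t ≤ 1) :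
    rbin (K + t) (m + 1) ≤ rbin K (m + 1) + t * rbin K m := by
  have key : ∏ j ∈ Finset.range (m+1), (K + t - j)
      ≤ (1 - t) * ∏ j ∈ Finset.range (m+1), (K - j) + t * ∏ j ∈ Finset.range (m+1), ((K - j) + 1) := by
    have := prod_add_le_chord h0 h1 (Finset.range (m+1)) (fun j => K - j) (by
      intro j hj
      have hj' : (j : ℝ) + 1 ≤ m + 1 := by exact_mod_cast Finset.mem_range.1 hj
      show (0:ℝ) ≤ K - (j:ℝ)
      linarith)
    calc ∏ j ∈ Finset.range (m+1), (K + t - j) = ∏ j ∈ Finset.range (m+1), ((K - j) + t) := by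
          apply Finset.prod_congr rfl; intro j _; ring
      _ ≤ _ := this
  have hpascal := rbin_pascal K m
  have h2 : rbin (K + t) (m + 1) ≤ (1 - t) * rbin K (m+1) + t * rbin (K+1) (m+1) := by
    unfold rbin
    have hprod1 : ∏ j ∈ Finset.range (m+1), ((K:ℝ) + 1 - j) = ∏ j ∈ Finset.range (m+1), ((K - j) + 1) := by
      apply Finset.prod_congr rfl; intro j _; ring
    rw [hprod1]
    have hfact : (0:ℝ) < (m+1).factorial := by positivity
    rw [← mul_div_assoc, ← mul_div_assoc, ← add_div]
    exact div_le_div_of_nonneg_right key hfact.le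
  calc rbin (K + t) (m + 1) ≤ (1 - t) * rbin K (m+1) + t * rbin (K+1) (m+1) := h2
    _ = rbin K (m + 1) + t * rbin K m := by rw [hpascal]; ring

/-! ### The key single-step numeric inequality -/

lemma rbin_star {p : ℕ} {K y x : ℝ}
    (hK : (p : ℝ) + 1 ≤ K) (hy : (p : ℝ) ≤ y) (hyK : y ≤ K)
    (hxK : K ≤ x) (hxK1 : x ≤ K + 1)
    (heq : rbin x (p + 1) = rbin K (p + 1) + rbin y p) :
    rbin K (p + 2) + rbin y (p + 1) ≤ rbin x (p + 2) := by
  have hB0 : 0 < rbin K p := rbin_pos (by linarith)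
  have hB1 : 0 ≤ rbin K (p + 1) := rbin_nonneg (by push_cast; linarith)
  have hB2 : 0 ≤ rbin y p := rbin_nonneg (by linarith)
  -- step a : y + 1 ≤ x
  have hstepa : y + 1 ≤ x := by
    have h1 : rbin (y + 1) (p + 1) = rbin y (p + 1) + rbin y p := rbin_pascal y p
    have h2 : rbin y (p + 1) ≤ rbin K (p + 1) := rbin_mono (by push_cast; linarith) hyK
    have h3 : rbin (y + 1) (p + 1) ≤ rbin x (p + 1) := by rw [h1, heq]; linarith
    exact le_arg_of_rbin_le (by omega) (by push_cast; linarith) (by push_cast; linarith) h3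
  -- step b : rbin y p ≤ (x - K) * rbin K p
  have hstepb : rbin y p ≤ (x - K) * rbin K p := by
    have hc := rbin_chord (K := K) (m := p) (by linarith) (t := x - K) (by linarith) (by linarith)
    rw [show K + (x - K) = x by ring] at hc
    rw [heq] at hc
    linarith
  -- main computation
  show rbin K (p + 1 + 1) + rbin y (p + 1) ≤ rbin x (p + 1 + 1)
  have f1 := rbin_succ x (p + 1)
  have f2 := rbin_succ K (p + 1)
  have f3 := rbin_succ y p
  have f4 := rbin_succ K p
  push_cast at f1 f2 f3 f4
  rw [f1, f2, f3, heq, f4]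
  set P : ℝ := (p : ℝ) with hP
  set B0 : ℝ := rbin K p with hB0def
  set B2 : ℝ := rbin y p with hB2def
  have hden1 : (0:ℝ) < P + 1 := by positivity
  have hden2 : (0:ℝ) < P + 1 + 1 := by positivity
  have key : B0 * (K - P) * (K - (P + 1)) + B2 * (y - P) * (P + 1 + 1)
      ≤ (B0 * (K - P) + B2 * (P + 1)) * (x - (P + 1)) := by
    have h5 : B2 * (K - P) ≤ B0 * (K - P) * (x - K) := by
      have hKP : (0:ℝ) ≤ K - P := by linarith
      nlinarith [hstepb]
    nlinarith [h5, mul_nonneg hB2 (by linarith : (0:ℝ) ≤ K - y),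
      mul_nonneg (mul_nonneg hB2 hden1.le) (by linarith : (0:ℝ) ≤ x - y - 1)]
  calc B0 * ((K - P) / (P + 1)) * ((K - (P + 1)) / (P + 1 + 1)) + B2 * ((y - P) / (P + 1))
      = (B0 * (K - P) * (K - (P + 1)) + B2 * (y - P) * (P + 1 + 1)) / ((P + 1) * (P + 1 + 1)) := by
        field_simp
        try ring
    _ ≤ ((B0 * (K - P) + B2 * (P + 1)) * (x - (P + 1))) / ((P + 1) * (P + 1 + 1)) := by
        apply div_le_div_of_nonneg_right key (by positivity)
    _ = (B0 * ((K - P) / (P + 1)) + B2) * ((x - (P + 1)) / (P + 1 + 1)) := by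
        field_simp
        try ring

/-! ### The ratio inequality -/

lemma rbin_ratio {i l₀ n : ℕ} {x : ℝ} (hl : 1 ≤ l₀) (hx : ((i * l₀ : ℕ) : ℝ) ≤ x) (hxn : x ≤ n) :
    rbin x (i * l₀) * (rbin (n : ℝ) l₀) ^ i ≤ (rbin x l₀) ^ i * rbin (n : ℝ) (i * l₀) := by
  -- reduce to products
  have hfact : (0:ℝ) < ((i*l₀).factorial : ℝ) := by positivity
  have hfactl : (0:ℝ) < ((l₀).factorial : ℝ) := by positivity
  have main : ∀ k : ℕ, k ≤ i →
      (∏ j ∈ Finset.range (k * l₀), (x - j)) * (∏ j ∈ Finset.range l₀, ((n:ℝ) - j)) ^ k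
      ≤ (∏ j ∈ Finset.range l₀, (x - j)) ^ k * ∏ j ∈ Finset.range (k * l₀), ((n:ℝ) - j) := by
    intro k
    induction k with
    | zero => simp
    | succ k ih =>
      intro hki
      have ihk := ih (by omega)
      have hxnonneg : ∀ j ∈ Finset.range (i * l₀), (0:ℝ) ≤ x - j := by
        intro j hj
        have : (j:ℝ) + 1 ≤ (i*l₀ : ℕ) := by exact_mod_cast Finset.mem_range.1 hj
        linarith
      have hnn : ∀ j ∈ Finset.range (i * l₀), (0:ℝ) ≤ (n:ℝ) - j := by
        intro j hj
        have := hxnonneg j hj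
        linarith
      have hkj : ∀ j, j < l₀ → k * l₀ + j + 1 ≤ i * l₀ := by
        intro j hj
        calc k * l₀ + j + 1 ≤ k * l₀ + l₀ := by omega
          _ = (k+1) * l₀ := by ring
          _ ≤ i * l₀ := Nat.mul_le_mul_right _ hki
      have hkjr : ∀ j : ℕ, j < l₀ → ((k * l₀:ℕ):ℝ) + (j:ℝ) + 1 ≤ ((i * l₀:ℕ):ℝ) := by
        intro j hj
        exact_mod_cast hkj j hj
      have hsplitx : ∏ j ∈ Finset.range ((k+1) * l₀), (x - j)
          = (∏ j ∈ Finset.range (k * l₀), (x - j)) * ∏ j ∈ Finset.range l₀, (x - ((k * l₀:ℕ):ℝ) - j) := by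
        rw [show (k+1) * l₀ = k * l₀ + l₀ by ring, Finset.prod_range_add]
        congr 1
        apply Finset.prod_congr rfl; intro j _; push_cast; ring
      have hsplitn : ∏ j ∈ Finset.range ((k+1) * l₀), ((n:ℝ) - j)
          = (∏ j ∈ Finset.range (k * l₀), ((n:ℝ) - j)) * ∏ j ∈ Finset.range l₀, ((n:ℝ) - ((k * l₀:ℕ):ℝ) - j) := by
        rw [show (k+1) * l₀ = k * l₀ + l₀ by ring, Finset.prod_range_add]
        congr 1
        apply Finset.prod_congr rfl; intro j _; push_cast; ring
      have hblock : (∏ j ∈ Finset.range l₀, (x - ((k * l₀:ℕ):ℝ) - j)) * ∏ j ∈ Finset.range l₀, ((n:ℝ) - j)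
          ≤ (∏ j ∈ Finset.range l₀, (x - j)) * ∏ j ∈ Finset.range l₀, ((n:ℝ) - ((k * l₀:ℕ):ℝ) - j) := by
        rw [← Finset.prod_mul_distrib, ← Finset.prod_mul_distrib]
        apply Finset.prod_le_prod
        · intro j hj
          have hj' : j < l₀ := Finset.mem_range.1 hj
          have h1 := hkjr j hj'
          have h2 : (0:ℝ) ≤ ((k * l₀:ℕ):ℝ) := by positivity
          apply mul_nonneg <;> linarith
        · intro j hj
          have hj' : j < l₀ := Finset.mem_range.1 hj
          have h1 := hkjr j hj'
          have hc : (0:ℝ) ≤ ((k*l₀:ℕ):ℝ) := by positivity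
          nlinarith [mul_nonneg hc (by linarith : (0:ℝ) ≤ (n:ℝ) - x)]
      have hnonneg2 : (0:ℝ) ≤ (∏ j ∈ Finset.range l₀, ((n:ℝ) - j)) := by
        apply Finset.prod_nonneg
        intro j hj
        apply hnn
        exact Finset.mem_range.2 (lt_of_lt_of_le (Finset.mem_range.1 hj)
          (le_trans (Nat.le_mul_of_pos_left _ (by omega)) (Nat.mul_le_mul_right _ (by omega : 1 ≤ i))))
      have hnonneg3 : (0:ℝ) ≤ (∏ j ∈ Finset.range l₀, (x - ((k * l₀:ℕ):ℝ) - j)) := by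
        apply Finset.prod_nonneg
        intro j hj
        have hj' : j < l₀ := Finset.mem_range.1 hj
        have h1 := hkjr j hj'
        linarith
      have hnonneg4 : (0:ℝ) ≤ (∏ j ∈ Finset.range (k * l₀), ((n:ℝ) - j)) := by
        apply Finset.prod_nonneg
        intro j hj
        apply hnn
        exact Finset.mem_range.2 (lt_of_lt_of_le (Finset.mem_range.1 hj)
          (Nat.mul_le_mul_right _ (by omega)))
      have hnonneg5 : (0:ℝ) ≤ (∏ j ∈ Finset.range l₀, (x - j)) ^ k := by
        apply pow_nonneg
        apply Finset.prod_nonneg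
        intro j hj
        apply hxnonneg
        exact Finset.mem_range.2 (lt_of_lt_of_le (Finset.mem_range.1 hj)
          (le_trans (Nat.le_mul_of_pos_left _ (by omega)) (Nat.mul_le_mul_right _ (by omega : 1 ≤ i))))
      calc (∏ j ∈ Finset.range ((k+1) * l₀), (x - j)) * (∏ j ∈ Finset.range l₀, ((n:ℝ) - j)) ^ (k+1)
          = ((∏ j ∈ Finset.range (k * l₀), (x - j)) * (∏ j ∈ Finset.range l₀, ((n:ℝ) - j)) ^ k) *
            ((∏ j ∈ Finset.range l₀, (x - ((k * l₀:ℕ):ℝ) - j)) * (∏ j ∈ Finset.range l₀, ((n:ℝ) - j))) := by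
            rw [hsplitx]; ring
        _ ≤ ((∏ j ∈ Finset.range l₀, (x - j)) ^ k * (∏ j ∈ Finset.range (k * l₀), ((n:ℝ) - j))) *
            ((∏ j ∈ Finset.range l₀, (x - j)) * (∏ j ∈ Finset.range l₀, ((n:ℝ) - ((k * l₀:ℕ):ℝ) - j))) := by
            exact mul_le_mul ihk hblock (mul_nonneg hnonneg3 hnonneg2) (mul_nonneg hnonneg5 hnonneg4)
        _ = (∏ j ∈ Finset.range l₀, (x - j)) ^ (k+1) * ∏ j ∈ Finset.range ((k+1) * l₀), ((n:ℝ) - j) := by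
            rw [hsplitn]; ring
  have main' := main i le_rfl
  unfold rbin
  rw [div_pow, div_pow, div_mul_div_comm, div_mul_div_comm]
  rw [show ((l₀.factorial:ℝ))^i * ((i*l₀).factorial:ℝ) = ((i*l₀).factorial:ℝ) * ((l₀.factorial:ℝ))^i by ring]
  exact div_le_div_of_nonneg_right main' (by positivity)

/-! ### Cardinality of colex initial segments -/

open Finset Colex in
lemma rbin_one (x : ℝ) : rbin x 1 = x := by
  unfold rbin; simp

namespace Finset
namespace Colex

variable {n : ℕ}

lemma card_initSeg_empty : #(initSeg (∅ : Finset (Fin n))) = 1 := by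
  have h : initSeg (∅ : Finset (Fin n)) = {∅} := by
    ext t
    simp only [mem_initSeg, Finset.card_empty, Finset.mem_singleton]
    constructor
    · rintro ⟨h1, _⟩
      exact (Finset.card_eq_zero.1 h1.symm)
    · rintro rfl
      simp
  rw [h, Finset.card_singleton]

lemma initSeg_filter_not_max (s : Finset (Fin n)) (hs : s.Nonempty) :
    (initSeg s).filter (fun t => s.max' hs ∉ t) = (Finset.Iio (s.max' hs)).powersetCard #s := by
  ext t
  simp only [Finset.mem_filter, mem_initSeg, Finset.mem_powersetCard]
  constructor
  · rintro ⟨⟨hcard, hle⟩, hM⟩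
    refine ⟨fun b hb => ?_, hcard.symm⟩
    have hball : ∀ b ∈ t, b ≤ s.max' hs := forall_le_mono hle (fun b hb => s.le_max' b hb)
    exact Finset.mem_Iio.2 (lt_of_le_of_ne (hball b hb) (by rintro rfl; exact hM hb))
  · rintro ⟨hsub, hcard⟩
    have hM : s.max' hs ∉ t := fun h => lt_irrefl _ (Finset.mem_Iio.1 (hsub h))
    refine ⟨⟨hcard.symm, ?_⟩, hM⟩
    rcases eq_or_ne t s with rfl | hne
    · exact le_rfl
    · apply le_of_lt
      rw [toColex_lt_toColex_iff_exists_forall_lt]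
      exact ⟨s.max' hs, s.max'_mem hs, hM, fun b hb _ => Finset.mem_Iio.1 (hsub hb)⟩

lemma card_initSeg_filter_max (s : Finset (Fin n)) (hs : s.Nonempty) :
    #((initSeg s).filter (fun t => s.max' hs ∈ t)) = #(initSeg (s.erase (s.max' hs))) := by
  set M := s.max' hs with hM
  refine Finset.card_bij' (fun t _ => t.erase M) (fun u _ => insert M u) ?_ ?_ ?_ ?_
  all_goals beta_reduce
  · -- forward membership
    intro t ht
    rw [Finset.mem_filter, mem_initSeg] at ht
    obtain ⟨⟨hcard, hle⟩, hMt⟩ := ht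
    rw [mem_initSeg]
    constructor
    · rw [Finset.card_erase_of_mem hMt, Finset.card_erase_of_mem (s.max'_mem hs), hcard]
    · rw [Finset.erase_eq, Finset.erase_eq]
      exact (toColex_sdiff_le_toColex_sdiff (Finset.singleton_subset_iff.2 hMt)
        (Finset.singleton_subset_iff.2 (s.max'_mem hs))).2 hle
  · -- backward membership
    intro u hu
    rw [mem_initSeg] at hu
    obtain ⟨hcard, hle⟩ := hu
    have hlt : ∀ b ∈ u, b < M := by
      apply forall_lt_mono hle
      intro b hb
      rw [Finset.mem_erase] at hb
      exact lt_of_le_of_ne (s.le_max' b hb.2) hb.1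
    have hMu : M ∉ u := fun h => lt_irrefl _ (hlt M h)
    rw [Finset.mem_filter, mem_initSeg]
    refine ⟨⟨?_, ?_⟩, Finset.mem_insert_self _ _⟩
    · rw [Finset.card_insert_of_notMem hMu, ← hcard, Finset.card_erase_add_one (s.max'_mem hs)]
    · have h1 : (insert M u) \ {M} = u := by
        rw [← Finset.erase_eq, Finset.erase_insert hMu]
      have h2 : s \ {M} = s.erase M := (Finset.erase_eq s M).symm
      refine (toColex_sdiff_le_toColex_sdiff (Finset.singleton_subset_iff.2
        (Finset.mem_insert_self _ _)) (Finset.singleton_subset_iff.2 (s.max'_mem hs))).1 ?_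
      rw [h1, h2]
      exact hle
  · intro t ht
    rw [Finset.mem_filter] at ht
    exact Finset.insert_erase ht.2
  · intro u hu
    rw [mem_initSeg] at hu
    have hlt : ∀ b ∈ u, b < M := by
      apply forall_lt_mono hu.2
      intro b hb
      rw [Finset.mem_erase] at hb
      exact lt_of_le_of_ne (s.le_max' b hb.2) hb.1
    exact Finset.erase_insert (fun h => lt_irrefl _ (hlt M h))

lemma card_initSeg_max (s : Finset (Fin n)) (hs : s.Nonempty) :
    #(initSeg s) = ((s.max' hs).val).choose #s + #(initSeg (s.erase (s.max' hs))) := by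
  have hsplit := Finset.card_filter_add_card_filter_not
    (s := initSeg s) (p := fun t => s.max' hs ∈ t)
  rw [← hsplit, card_initSeg_filter_max s hs, initSeg_filter_not_max s hs,
    Finset.card_powersetCard, Fin.card_Iio]
  ring

lemma card_initSeg_le (s : Finset (Fin n)) (hs : s.Nonempty) :
    #(initSeg s) ≤ ((s.max' hs).val + 1).choose #s := by
  have hsub : initSeg s ⊆ (Finset.Iic (s.max' hs)).powersetCard #s := by
    intro t ht
    rw [mem_initSeg] at ht
    rw [Finset.mem_powersetCard]
    refine ⟨fun b hb => Finset.mem_Iic.2 ?_, ht.1.symm⟩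
    exact forall_le_mono ht.2 (fun b hb => s.le_max' b hb) b hb
  calc #(initSeg s) ≤ #((Finset.Iic (s.max' hs)).powersetCard #s) := Finset.card_le_card hsub
    _ = ((s.max' hs).val + 1).choose #s := by rw [Finset.card_powersetCard, Fin.card_Iic]

end Colex
end Finset

/-! ### IVT helper -/

lemma exists_rbin_eq {a b v : ℝ} (m : ℕ) (hab : a ≤ b) (hva : rbin a m ≤ v) (hvb : v ≤ rbin b m) :
    ∃ x, a ≤ x ∧ x ≤ b ∧ rbin x m = v := by
  have hcont : ContinuousOn (fun z => rbin z m) (Set.Icc a b) := by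
    apply Continuous.continuousOn
    unfold rbin
    apply Continuous.div_const
    exact continuous_finset_prod _ (fun j _ => continuous_id.sub continuous_const)
  have hsub := intermediate_value_Icc hab hcont
  obtain ⟨x, hx, hxv⟩ := hsub ⟨hva, hvb⟩
  exact ⟨x, hx.1, hx.2, hxv⟩

/-! ### Single-step bound for initial segments -/

open Finset Colex in
lemma initSeg_single_step {n : ℕ} (q : ℕ) (hq : 1 ≤ q) :
    ∀ s : Finset (Fin n), ∀ hs : s.Nonempty, #s = q + 1 →
    ∀ x : ℝ, (q : ℝ) - 1 ≤ x →
    (#(initSeg (s.erase (s.min' hs))) : ℝ) ≤ rbin x q →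
    (#(initSeg s) : ℝ) ≤ rbin x (q + 1) := by
  induction q, hq using Nat.le_induction with
  | base =>
    intro s hs hcard x hx hhyp
    have h2 : 1 < #s := by omega
    have hminmax : s.min' hs < s.max' hs := Finset.min'_lt_max'_of_card s h2
    have hMt : s.max' hs ∈ s.erase (s.min' hs) :=
      Finset.mem_erase.2 ⟨(ne_of_gt hminmax), s.max'_mem hs⟩
    have htcard : #(s.erase (s.min' hs)) = 1 := by
      rw [Finset.card_erase_of_mem (s.min'_mem hs), hcard]
    have ht : s.erase (s.min' hs) = {s.max' hs} := by
      obtain ⟨a, ha⟩ := Finset.card_eq_one.1 htcard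
      rw [ha]
      rw [ha, Finset.mem_singleton] at hMt
      rw [hMt]
    rw [ht] at hhyp
    have hseg1 : #(initSeg ({s.max' hs} : Finset (Fin n))) = (s.max' hs).val + 1 := by
      rw [card_initSeg_max {s.max' hs} (Finset.singleton_nonempty _)]
      simp [card_initSeg_empty, Finset.max'_singleton, Nat.choose_one_right]
    rw [hseg1, rbin_one] at hhyp
    -- now hhyp : ((max.val + 1 : ℕ) : ℝ) ≤ x
    have hA := card_initSeg_max s hs
    rw [hcard] at hA
    have h11 : (s.max' hs).val.choose (1+1) = (s.max' hs).val.choose 2 := rfl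
    rw [h11] at hA
    have hs'ne : (s.erase (s.max' hs)).Nonempty := by
      rw [← Finset.card_pos, Finset.card_erase_of_mem (s.max'_mem hs), hcard]
      omega
    have hs'card : #(s.erase (s.max' hs)) = 1 := by
      rw [Finset.card_erase_of_mem (s.max'_mem hs), hcard]
    have hbound : #(initSeg (s.erase (s.max' hs))) ≤ (s.max' hs).val := by
      refine le_trans (card_initSeg_le _ hs'ne) ?_
      rw [hs'card, Nat.choose_one_right]
      have hmem := Finset.mem_erase.1 ((s.erase (s.max' hs)).max'_mem hs'ne)
      have hlt : (s.erase (s.max' hs)).max' hs'ne < s.max' hs :=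
        lt_of_le_of_ne (s.le_max' _ hmem.2) hmem.1
      have := (Fin.lt_def).1 hlt
      omega
    have hcs : ((s.max' hs).val + 1).choose 2
        = (s.max' hs).val.choose 1 + (s.max' hs).val.choose 2 := Nat.choose_succ_succ _ 1
    have hnat : #(initSeg s) ≤ ((s.max' hs).val + 1).choose 2 := by
      rw [hcs, Nat.choose_one_right, hA]
      omega
    calc (#(initSeg s) : ℝ) ≤ (((s.max' hs).val + 1).choose 2 : ℝ) := by exact_mod_cast hnat
      _ = rbin (((s.max' hs).val : ℝ) + 1) 2 := by
          rw [show ((s.max' hs).val : ℝ) + 1 = (((s.max' hs).val + 1 : ℕ) : ℝ) by push_cast; ring,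
            rbin_nat]
      _ ≤ rbin x 2 := by
          apply rbin_mono (by push_cast; linarith) ?_
          push_cast at hhyp
          linarith
  | succ q hq ih =>
    intro s hs hcard x hx hhyp
    have h2 : 1 < #s := by omega
    have hminmax : s.min' hs < s.max' hs := Finset.min'_lt_max'_of_card s h2
    have hMmem : s.max' hs ∈ s.erase (s.min' hs) :=
      Finset.mem_erase.2 ⟨(ne_of_gt hminmax), s.max'_mem hs⟩
    set M := s.max' hs with hMdef
    set K := M.val with hKdef
    set t := s.erase (s.min' hs) with htdef
    have htne : t.Nonempty := ⟨M, hMmem⟩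
    have htcard : #t = q + 1 := by
      rw [htdef, Finset.card_erase_of_mem (s.min'_mem hs), hcard]
      omega
    have htmax : t.max' htne = M := by
      apply le_antisymm
      · exact s.le_max' _ (Finset.mem_of_mem_erase (t.max'_mem htne))
      · exact t.le_max' M hMmem
    set s' := s.erase M with hs'def
    have hs'ne : s'.Nonempty := ⟨s.min' hs, Finset.mem_erase.2 ⟨ne_of_lt hminmax, s.min'_mem hs⟩⟩
    have hs'card : #s' = q + 1 := by
      rw [hs'def, Finset.card_erase_of_mem (s.max'_mem hs), hcard]
      omega
    have hmins' : s'.min' hs'ne = s.min' hs := by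
      apply le_antisymm
      · exact s'.min'_le _ (Finset.mem_erase.2 ⟨ne_of_lt hminmax, s.min'_mem hs⟩)
      · exact s.min'_le _ (Finset.mem_of_mem_erase (s'.min'_mem hs'ne))
    set t' := t.erase M with ht'def
    have ht'eq : t' = s'.erase (s'.min' hs'ne) := by
      rw [hmins', ht'def, htdef, hs'def]
      exact Finset.erase_right_comm
    have ht'card : #t' = q := by
      rw [ht'def, Finset.card_erase_of_mem hMmem, htcard]
      omega
    have ht'ne : t'.Nonempty := Finset.card_pos.1 (by omega)
    have hAt : #(initSeg t) = K.choose (q + 1) + #(initSeg t') := by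
      have h := card_initSeg_max t htne
      rw [htmax, htcard] at h
      exact h
    have hV1 : 1 ≤ #(initSeg t') := Finset.card_pos.2 initSeg_nonempty
    have hV'le : #(initSeg t') ≤ K.choose q := by
      refine le_trans (card_initSeg_le t' ht'ne) ?_
      rw [ht'card]
      have hmem := Finset.mem_erase.1 (t'.max'_mem ht'ne)
      have hlt : t'.max' ht'ne < M := by
        refine lt_of_le_of_ne ?_ hmem.1
        rw [← htmax]
        exact t.le_max' _ hmem.2
      have hvallt := (Fin.lt_def).1 hlt
      exact Nat.choose_le_choose q (by omega)
    have hKq : q + 2 ≤ K + 1 := by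
      have hsub : s ⊆ Finset.Iic M := fun b hb => Finset.mem_Iic.2 (s.le_max' b hb)
      have hle := Finset.card_le_card hsub
      rw [Fin.card_Iic, hcard] at hle
      omega
    -- choose y with rbin y q = #initSeg t'
    obtain ⟨y, hyq, hyK, hyeq⟩ := exists_rbin_eq (a := (q : ℝ)) (b := (K : ℝ))
      (v := (#(initSeg t') : ℝ)) q (by exact_mod_cast (by omega : q ≤ K))
      (by rw [rbin_nat]; exact_mod_cast (by simpa [Nat.choose_self] using hV1))
      (by rw [rbin_nat]; exact_mod_cast hV'le)
    -- IH on s'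
    have hIH : (#(initSeg s') : ℝ) ≤ rbin y (q + 1) := by
      apply ih s' hs'ne hs'card y (by linarith)
      rw [← ht'eq, hyeq]
    -- choose x₀ with rbin x₀ (q+1) = choose + rbin y q
    have hynn : 0 ≤ rbin y q := rbin_nonneg (by linarith)
    have hW1 : rbin (K : ℝ) (q + 1) ≤ (K.choose (q + 1) : ℝ) + rbin y q := by
      rw [rbin_nat]; linarith
    have hW2 : (K.choose (q + 1) : ℝ) + rbin y q ≤ rbin ((K : ℝ) + 1) (q + 1) := by
      have hpas := rbin_pascal (K : ℝ) q
      have hmono : rbin y q ≤ rbin (K : ℝ) q := rbin_mono (by linarith) hyK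
      rw [rbin_nat] at hmono
      rw [hpas, rbin_nat, rbin_nat]
      linarith
    obtain ⟨x₀, hx₀K, hx₀K1, hx₀eq⟩ := exists_rbin_eq (q + 1) (by linarith) hW1 hW2
    -- x₀ ≤ x
    have hhyp' : rbin x₀ (q + 1) ≤ rbin x (q + 1) := by
      rw [hx₀eq]
      calc (K.choose (q + 1) : ℝ) + rbin y q = (#(initSeg t) : ℝ) := by
            rw [hAt, hyeq]; push_cast; ring
        _ ≤ rbin x (q + 1) := hhyp
    have hKcast : ((q : ℝ)) + 1 ≤ (K : ℝ) := by exact_mod_cast (by omega : q + 1 ≤ K)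
    have hx₀x : x₀ ≤ x := by
      apply le_arg_of_rbin_le (by omega) (by push_cast; linarith) ?_ hhyp'
      push_cast at hx ⊢
      linarith
    -- apply star
    have hstar := rbin_star (p := q) (K := (K : ℝ)) (y := y) (x := x₀)
      hKcast hyq hyK hx₀K hx₀K1 (by rw [hx₀eq, rbin_nat])
    -- conclude
    have hAs := card_initSeg_max s hs
    rw [hcard] at hAs
    calc (#(initSeg s) : ℝ) = rbin (K : ℝ) (q + 2) + (#(initSeg s') : ℝ) := by
          rw [hAs, rbin_nat]; push_cast; ring
      _ ≤ rbin (K : ℝ) (q + 2) + rbin y (q + 1) := by linarith [hIH]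
      _ ≤ rbin x₀ (q + 2) := hstar
      _ ≤ rbin x (q + 2) := by
          apply rbin_mono ?_ hx₀x
          push_cast
          linarith

/-! ### Multi-step bound -/

open Finset Colex in
open scoped FinsetFamily in
lemma initSeg_multi_step {n : ℕ} :
    ∀ d l : ℕ, 1 ≤ l → ∀ s : Finset (Fin n), ∀ hsne : s.Nonempty, #s = l + d →
    ∀ x : ℝ, ((l + d : ℕ) : ℝ) - 1 ≤ x →
    (#(∂^[d] (initSeg s)) : ℝ) ≤ rbin x l → (#(initSeg s) : ℝ) ≤ rbin x (l + d) := by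
  intro d
  induction d with
  | zero =>
    intro l hl s hsne hcard x hx hhyp
    simpa using hhyp
  | succ d ih =>
    intro l hl s hsne hcard x hx hhyp
    have hcard' : #s = (l + d) + 1 := by omega
    have hstep : ∂ (initSeg s) = initSeg (s.erase (s.min' hsne)) := shadow_initSeg hsne
    have hiter : ∂^[d+1] (initSeg s) = ∂^[d] (initSeg (s.erase (s.min' hsne))) := by
      rw [Function.iterate_succ_apply, hstep]
    have hs'ne : (s.erase (s.min' hsne)).Nonempty := by
      rw [← Finset.card_pos, Finset.card_erase_of_mem (s.min'_mem hsne), hcard']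
      omega
    have hs'card : #(s.erase (s.min' hsne)) = l + d := by
      rw [Finset.card_erase_of_mem (s.min'_mem hsne), hcard']
      omega
    have h1 : (#(initSeg (s.erase (s.min' hsne))) : ℝ) ≤ rbin x (l + d) := by
      apply ih l hl _ hs'ne hs'card x ?_ ?_
      · push_cast at hx ⊢; linarith
      · rw [← hiter]; exact hhyp
    have h2 := initSeg_single_step (l + d) (by omega) s hsne (by omega) x
      (by push_cast at hx ⊢; linarith) h1
    have heq : l + (d + 1) = (l + d) + 1 := by omega
    rw [heq]
    exact h2

/-! ### Existence of initial segments of any size -/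

open Finset Colex in
lemma exists_initSeg_card {n R m : ℕ}
    (hm : m ≤ #(Finset.univ.powersetCard R : Finset (Finset (Fin n)))) :
    ∃ 𝒞 : Finset (Finset (Fin n)), IsInitSeg 𝒞 R ∧ #𝒞 = m := by
  induction m with
  | zero => exact ⟨∅, isInitSeg_empty, rfl⟩
  | succ m ih =>
    obtain ⟨𝒞, h𝒞, hcard⟩ := ih (by omega)
    have hne : ((Finset.univ.powersetCard R : Finset (Finset (Fin n))) \ 𝒞).Nonempty := by
      rw [Finset.sdiff_nonempty]
      intro hcon
      have := Finset.card_le_card hcon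
      omega
    obtain ⟨u, hu, humin⟩ := Finset.exists_min_image _ toColex hne
    have huR : #u = R := Finset.mem_powersetCard_univ.1 (Finset.mem_sdiff.1 hu).1
    have hu𝒞 : u ∉ 𝒞 := (Finset.mem_sdiff.1 hu).2
    refine ⟨insert u 𝒞, ⟨?_, ?_⟩, by rw [Finset.card_insert_of_notMem hu𝒞, hcard]⟩
    · intro v hv
      rw [Finset.mem_coe, Finset.mem_insert] at hv
      rcases hv with rfl | hv'
      · exact huR
      · exact h𝒞.1 hv'
    · rintro v w hv ⟨hlt, hwR⟩
      rcases Finset.mem_insert.1 hv with rfl | hv'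
      · by_cases hw𝒞 : w ∈ 𝒞
        · exact Finset.mem_insert_of_mem hw𝒞
        · have hwlevel : w ∈ Finset.univ.powersetCard R \ 𝒞 :=
            Finset.mem_sdiff.2 ⟨Finset.mem_powersetCard_univ.2 hwR, hw𝒞⟩
          exact absurd hlt (not_lt.2 (humin w hwlevel))
      · exact Finset.mem_insert_of_mem (h𝒞.2 hv' ⟨hlt, hwR⟩)

/-! ### Transfer between `Finset ℕ` (subsets of `Icc 1 n`) and `Finset (Fin n)` -/

lemma fin_succ_inj {n : ℕ} : Function.Injective (fun x : Fin n => x.val + 1) := by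
  intro a b h
  simp only [add_left_inj] at h
  exact Fin.val_injective h

lemma image_filter_preimage {n : ℕ} (u : Finset ℕ) (hu : u ⊆ Finset.Icc 1 n) :
    (Finset.univ.filter (fun x : Fin n => x.val + 1 ∈ u)).image (fun x : Fin n => x.val + 1) = u := by
  ext k
  simp only [Finset.mem_image, Finset.mem_filter, Finset.mem_univ, true_and]
  constructor
  · rintro ⟨x, hx, rfl⟩
    exact hx
  · intro hk
    have hk' := Finset.mem_Icc.1 (hu hk)
    refine ⟨⟨k - 1, by omega⟩, ?_, by simp; omega⟩
    simpa only [show k - 1 + 1 = k by omega] using hk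

lemma card_family_transfer {n l : ℕ} (B : Finset (Finset ℕ))
    (hB : B ⊆ (Finset.Icc 1 n).powersetCard l) :
    #((Finset.univ.powersetCard l : Finset (Finset (Fin n))).filter
        (fun t => t.image (fun x : Fin n => x.val + 1) ∈ B)) = #B := by
  refine Finset.card_bij' (fun t _ => t.image (fun x : Fin n => x.val + 1))
    (fun u _ => Finset.univ.filter (fun x : Fin n => x.val + 1 ∈ u)) ?_ ?_ ?_ ?_
  all_goals beta_reduce
  · intro t ht
    exact (Finset.mem_filter.1 ht).2
  · intro u hu
    have hsub : u ⊆ Finset.Icc 1 n := (Finset.mem_powersetCard.1 (hB hu)).1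
    have hcard : #u = l := (Finset.mem_powersetCard.1 (hB hu)).2
    have himg := image_filter_preimage u hsub
    rw [Finset.mem_filter]
    constructor
    · rw [Finset.mem_powersetCard_univ]
      have := Finset.card_image_of_injective
        (Finset.univ.filter (fun x : Fin n => x.val + 1 ∈ u)) (fin_succ_inj (n := n))
      rw [himg] at this
      omega
    · rw [himg]; exact hu
  · intro t ht
    ext x
    simp only [Finset.mem_filter, Finset.mem_univ, true_and, Finset.mem_image]
    constructor
    · rintro ⟨y, hy, hxy⟩
      rwa [← fin_succ_inj hxy]
    · intro hx
      exact ⟨x, hx, rfl⟩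
  · intro u hu
    exact image_filter_preimage u (Finset.mem_powersetCard.1 (hB hu)).1

lemma rbin_sub_one {m : ℕ} (hm : 1 ≤ m) : rbin ((m : ℝ) - 1) m = 0 := by
  unfold rbin
  rw [Finset.prod_eq_zero (Finset.mem_range.2 (Nat.sub_lt hm Nat.one_pos)), zero_div]
  have h : ((m - 1 : ℕ) : ℝ) = (m : ℝ) - 1 := by
    rw [Nat.cast_sub hm]; norm_num
  rw [h]; ring

/-! ### Main theorem -/

/-- The `l`-extension of a family `A` inside the space `[n] = {1, …, n}`:
all `l`-element subsets of `[n]` containing some member of `A`. -/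
def extFam (n : ℕ) (A : Finset (Finset ℕ)) (l : ℕ) : Finset (Finset ℕ) :=
  ((Finset.Icc 1 n).powersetCard l).filter (fun t => ∃ s ∈ A, s ⊆ t)

open Finset Colex in
open scoped FinsetFamily in
theorem stmt_13 (n l₀ i : ℕ) (hl₀ : 1 ≤ l₀) (hi : 1 ≤ i) (hin : i * l₀ ≤ n)
    (δ : ℝ) (hδ0 : 0 ≤ δ) (hδ1 : δ ≤ 1)
    (A : Finset (Finset ℕ)) (hA : A ⊆ (Finset.Icc 1 n).powersetCard l₀)
    (hAcard : (A.card : ℝ) ≥ (1 - δ) * n.choose l₀) :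
    ((extFam n A (i * l₀)).card : ℝ) ≥ (1 - δ ^ i) * n.choose (i * l₀) := by
  classical
  obtain ⟨j, rfl⟩ : ∃ j, i = j + 1 := ⟨i - 1, by omega⟩
  set R := (j + 1) * l₀ with hRdef
  set d := j * l₀ with hddef
  have hld : l₀ + d = R := by rw [hRdef, hddef]; ring
  have hRn : R ≤ n := hin
  have hl₀R : l₀ ≤ R := by
    calc l₀ = 1 * l₀ := (one_mul l₀).symm
      _ ≤ (j + 1) * l₀ := Nat.mul_le_mul_right _ (by omega)
  have hl₀n : l₀ ≤ n := le_trans hl₀R hRn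
  have hR1 : 1 ≤ R := le_trans hl₀ hl₀R
  set e : Fin n → ℕ := fun x => x.val + 1 with hedef
  have hinj : Function.Injective e := fin_succ_inj
  set 𝒩₀ := ((Finset.Icc 1 n).powersetCard R).filter (fun t => ¬ ∃ s ∈ A, s ⊆ t) with h𝒩₀def
  have hIcc : #(Finset.Icc 1 n) = n := by rw [Nat.card_Icc]; omega
  have hsplitext : #(extFam n A R) + #𝒩₀ = n.choose R := by
    have h := Finset.card_filter_add_card_filter_not
      (s := (Finset.Icc 1 n).powersetCard R) (p := fun t => ∃ s ∈ A, s ⊆ t)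
    rw [Finset.card_powersetCard, hIcc] at h
    exact h
  have hCLpos : (0:ℝ) < (n.choose l₀ : ℝ) := by exact_mod_cast Nat.choose_pos hl₀n
  have hCRnn : (0:ℝ) ≤ (n.choose R : ℝ) := by positivity
  suffices hN : (#𝒩₀ : ℝ) ≤ δ ^ (j + 1) * n.choose R by
    have hcast : (#(extFam n A R) : ℝ) + (#𝒩₀ : ℝ) = (n.choose R : ℝ) := by
      exact_mod_cast hsplitext
    rw [ge_iff_le, sub_mul, one_mul]
    linarith
  set 𝒩 := ((Finset.univ.powersetCard R : Finset (Finset (Fin n)))).filter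
    (fun t => t.image e ∈ 𝒩₀) with h𝒩def
  have h𝒩₀sub : 𝒩₀ ⊆ (Finset.Icc 1 n).powersetCard R := Finset.filter_subset _ _
  have h𝒩card : #𝒩 = #𝒩₀ := card_family_transfer 𝒩₀ h𝒩₀sub
  rcases Nat.eq_zero_or_pos (#𝒩₀) with h0 | hpos
  · rw [h0]
    push_cast
    exact mul_nonneg (pow_nonneg hδ0 _) hCRnn
  have h𝒩ne : 𝒩.Nonempty := Finset.card_pos.1 (by omega)
  have h𝒩sized : (𝒩 : Set (Finset (Fin n))).Sized R := by
    intro t ht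
    rw [Finset.mem_coe, h𝒩def, Finset.mem_filter] at ht
    exact Finset.mem_powersetCard_univ.1 ht.1
  set Bc := ((Finset.Icc 1 n).powersetCard l₀).filter (fun v => v ∉ A) with hBcdef
  have hBccard : #A + #Bc = n.choose l₀ := by
    have h := Finset.card_filter_add_card_filter_not
      (s := (Finset.Icc 1 n).powersetCard l₀) (p := fun v => v ∈ A)
    rw [Finset.card_powersetCard, hIcc] at h
    rw [Finset.filter_mem_eq_inter, Finset.inter_eq_right.2 hA] at h
    exact h
  have hsub : ∂^[d] 𝒩 ⊆ (Finset.univ.powersetCard l₀).filter (fun u => u.image e ∈ Bc) := by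
    intro u hu
    rw [Finset.mem_shadow_iterate_iff_exists_sdiff] at hu
    obtain ⟨t, ht, hut, hcd⟩ := hu
    rw [h𝒩def, Finset.mem_filter] at ht
    obtain ⟨htlevel, htB⟩ := ht
    have htR : #t = R := Finset.mem_powersetCard_univ.1 htlevel
    have hcards := Finset.card_sdiff_add_card_eq_card hut
    have hucard : #u = l₀ := by omega
    have himgsub : u.image e ⊆ t.image e := Finset.image_subset_image hut
    have ht𝒩₀ := Finset.mem_filter.1 htB
    have htIcc : t.image e ⊆ Finset.Icc 1 n := (Finset.mem_powersetCard.1 ht𝒩₀.1).1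
    rw [Finset.mem_filter]
    refine ⟨Finset.mem_powersetCard_univ.2 hucard, ?_⟩
    rw [hBcdef, Finset.mem_filter]
    refine ⟨Finset.mem_powersetCard.2 ⟨himgsub.trans htIcc, ?_⟩, ?_⟩
    · rw [Finset.card_image_of_injective _ hinj, hucard]
    · intro huA
      exact ht𝒩₀.2 ⟨u.image e, huA, himgsub⟩
  have hDle : (#(∂^[d] 𝒩) : ℝ) ≤ δ * n.choose l₀ := by
    have h1 : #(∂^[d] 𝒩) ≤ #Bc := by
      refine le_trans (Finset.card_le_card hsub) ?_
      rw [card_family_transfer Bc (Finset.filter_subset _ _)]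
    have h2 : (#A : ℝ) + (#Bc : ℝ) = (n.choose l₀ : ℝ) := by exact_mod_cast hBccard
    have h3 : (#(∂^[d] 𝒩) : ℝ) ≤ (#Bc : ℝ) := by exact_mod_cast h1
    linarith
  obtain ⟨t₀, ht₀⟩ := h𝒩ne
  have ht₀R : #t₀ = R := h𝒩sized ht₀
  have hshadow_t₀ : ∂^[d] ({t₀} : Finset (Finset (Fin n))) = t₀.powersetCard l₀ := by
    ext u
    rw [Finset.mem_shadow_iterate_iff_exists_sdiff, Finset.mem_powersetCard]
    constructor
    · rintro ⟨v, hv, huv, hcd⟩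
      rw [Finset.mem_singleton] at hv
      subst hv
      have := Finset.card_sdiff_add_card_eq_card huv
      exact ⟨huv, by omega⟩
    · rintro ⟨hsub', hcard'⟩
      refine ⟨t₀, Finset.mem_singleton_self _, hsub', ?_⟩
      rw [Finset.card_sdiff_of_subset hsub', ht₀R, hcard']
      omega
  have hlow : R.choose l₀ ≤ #(∂^[d] 𝒩) := by
    have hmono : ∂^[d] ({t₀} : Finset (Finset (Fin n))) ⊆ ∂^[d] 𝒩 :=
      (Finset.shadow_monotone.iterate d) (Finset.singleton_subset_iff.2 ht₀)
    calc R.choose l₀ = #(t₀.powersetCard l₀) := by rw [Finset.card_powersetCard, ht₀R]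
      _ = #(∂^[d] ({t₀} : Finset (Finset (Fin n)))) := by rw [hshadow_t₀]
      _ ≤ #(∂^[d] 𝒩) := Finset.card_le_card hmono
  have hRl₀pos : 1 ≤ R.choose l₀ := Nat.choose_pos hl₀R
  have hlowR : (R.choose l₀ : ℝ) ≤ δ * n.choose l₀ := by
    calc (R.choose l₀ : ℝ) ≤ (#(∂^[d] 𝒩) : ℝ) := by exact_mod_cast hlow
      _ ≤ δ * n.choose l₀ := hDle
  obtain ⟨x, hxl, hxn, hxeq⟩ := exists_rbin_eq (a := (l₀ : ℝ) - 1) (b := (n : ℝ))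
    (v := δ * n.choose l₀) l₀
    (by have : (l₀:ℝ) ≤ (n:ℝ) := by exact_mod_cast hl₀n
        linarith)
    (by rw [rbin_sub_one hl₀]
        have : (1:ℝ) ≤ (R.choose l₀ : ℝ) := by exact_mod_cast hRl₀pos
        linarith)
    (by rw [rbin_nat]
        nlinarith [hCLpos])
  have hxR : (R : ℝ) ≤ x := by
    apply le_arg_of_rbin_le hl₀ ?_ ?_ ?_
    · have : (l₀:ℝ) ≤ (R:ℝ) := by exact_mod_cast hl₀R
      linarith
    · linarith
    · rw [rbin_nat, hxeq]
      exact hlowR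
  have h𝒩sub : 𝒩 ⊆ Finset.univ.powersetCard R := Finset.filter_subset _ _
  obtain ⟨𝒞, h𝒞init, h𝒞card⟩ := exists_initSeg_card (n := n) (R := R) (m := #𝒩)
    (Finset.card_le_card h𝒩sub)
  have h𝒞ne : 𝒞.Nonempty := Finset.card_pos.1 (by omega)
  obtain ⟨s, hsR, h𝒞eq⟩ := h𝒞init.exists_initSeg h𝒞ne
  have hkk := Finset.iterated_kk (𝒜 := 𝒩) (𝒞 := 𝒞) (r := R) (k := d)
    h𝒩sized (le_of_eq h𝒞card) h𝒞init
  have hsne : s.Nonempty := Finset.card_pos.1 (by omega)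
  have hscard : #s = l₀ + d := by rw [hsR, ← hld]
  have hms : (#(initSeg s) : ℝ) ≤ rbin x (l₀ + d) := by
    apply initSeg_multi_step d l₀ hl₀ s hsne hscard x ?_ ?_
    · have : ((l₀ + d : ℕ) : ℝ) = (R : ℝ) := by exact_mod_cast congrArg (Nat.cast (R := ℝ)) hld
      rw [this]
      linarith
    · calc (#(∂^[d] (initSeg s)) : ℝ) ≤ (#(∂^[d] 𝒩) : ℝ) := by
            rw [← h𝒞eq]; exact_mod_cast hkk
        _ ≤ δ * n.choose l₀ := hDle
        _ = rbin x l₀ := hxeq.symm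
  have h𝒩le : (#𝒩₀ : ℝ) ≤ rbin x R := by
    calc (#𝒩₀ : ℝ) = (#𝒞 : ℝ) := by rw [h𝒞card, h𝒩card]
      _ = (#(initSeg s) : ℝ) := by rw [h𝒞eq]
      _ ≤ rbin x (l₀ + d) := hms
      _ = rbin x R := by rw [hld]
  have hratio := rbin_ratio (i := j + 1) (l₀ := l₀) (n := n) (x := x) hl₀
    (by rw [show ((j+1) * l₀ : ℕ) = R from rfl]; exact_mod_cast hxR) hxn
  rw [rbin_nat, rbin_nat, hxeq] at hratio
  -- hratio : rbin x R * (choose l₀)^(j+1) ≤ (δ * choose l₀)^(j+1) * choose R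
  have hfinal : rbin x R ≤ δ ^ (j + 1) * n.choose R := by
    have hpow : (0:ℝ) < ((n.choose l₀ : ℝ)) ^ (j + 1) := pow_pos hCLpos _
    have h1 : rbin x R * ((n.choose l₀ : ℝ)) ^ (j + 1)
        ≤ (δ ^ (j + 1) * n.choose R) * ((n.choose l₀ : ℝ)) ^ (j + 1) := by
      calc rbin x R * ((n.choose l₀ : ℝ)) ^ (j + 1)
          ≤ (δ * n.choose l₀) ^ (j + 1) * (n.choose ((j+1) * l₀) : ℝ) := hratio
        _ = (δ ^ (j + 1) * n.choose R) * ((n.choose l₀ : ℝ)) ^ (j + 1) := by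
            rw [mul_pow]; ring
    exact le_of_mul_le_mul_right h1 hpow
  linarith
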